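/- Let X be a Banach space, T ∈ L(X) with finite descent q(T) < ∞, and F ∈ L(X) a power finite rank operator (dim R(F^m) < ∞ for some m ≥ 1) with F ∈ comm_w(T). Then T + F has finite descent q(T+F) < ∞. -/

import Mathlib

open Finset

section RingFacts2
variable {A : Type*} [Ring A] {T F : A}



private lemma hTC' (h4 : Commute (T*F) T) : T * (T*F - F*T) = 0 := by
  rw [mul_sub, ← mul_assoc T F T, h4.eq, sub_self]

private lemma hCT' (h2 : Commute (F*T) T) : (T*F - F*T) * T = 0 := by
  rw [sub_mul, mul_assoc T F T, ← h2.eq, sub_self]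

private lemma hFC' (h1 : Commute (F*T) F) : F * (T*F - F*T) = 0 := by
  rw [mul_sub, ← mul_assoc F T F, h1.eq, sub_self]

private lemma hCF' (h3 : Commute (T*F) F) : (T*F - F*T) * F = 0 := by
  rw [sub_mul, mul_assoc F T F, ← h3.eq, sub_self]

private lemma hTpowC' (h4 : Commute (T*F) T) (e : ℕ) :
    T^(e+1) * (T*F - F*T) = 0 := by
  rw [pow_succ, mul_assoc, hTC' h4, mul_zero]

private lemma hFpowC' (h1 : Commute (F*T) F) (e : ℕ) :
    F^(e+1) * (T*F - F*T) = 0 := by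
  rw [pow_succ, mul_assoc, hFC' h1, mul_zero]

private lemma hCTpow' (h2 : Commute (F*T) T) (e : ℕ) :
    (T*F - F*T) * T^(e+1) = 0 := by
  rw [pow_succ', ← mul_assoc, hCT' h2, zero_mul]

private lemma F_Tpow' (h2 : Commute (F*T) T) (h4 : Commute (T*F) T) :
    ∀ e, F * T^(e+2) = T^(e+2) * F := by
  intro e
  induction e with
  | zero =>
    calc F * T^2 = (F*T)*T := by rw [pow_two, ← mul_assoc]
    _ = T*(F*T) := h2.eq
    _ = (T*F)*T := (mul_assoc T F T).symm
    _ = T*(T*F) := h4.eq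
    _ = T^2 * F := by rw [pow_two, mul_assoc]
  | succ e ih =>
    calc F * T^(e+1+2) = F * (T^(e+2) * T) := by rw [show e+1+2 = (e+2)+1 from rfl, pow_succ]
    _ = (F * T^(e+2)) * T := (mul_assoc _ _ _).symm
    _ = (T^(e+2) * F) * T := by rw [ih]
    _ = T^(e+2) * (F*T) := mul_assoc _ _ _
    _ = T^(e+2) * (T*F) - T^(e+2) * (T*F - F*T) := by rw [← mul_sub, sub_sub_cancel]
    _ = T^(e+2) * (T*F) := by rw [hTpowC' h4 (e+1), sub_zero]
    _ = (T^(e+2) * T) * F := (mul_assoc _ _ _).symm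
    _ = T^(e+1+2) * F := by rw [← pow_succ]

private lemma T_Fpow' (h1 : Commute (F*T) F) (h3 : Commute (T*F) F) :
    ∀ e, T * F^(e+2) = F^(e+2) * T := by
  intro e
  induction e with
  | zero =>
    calc T * F^2 = (T*F)*F := by rw [pow_two, ← mul_assoc]
    _ = F*(T*F) := h3.eq
    _ = (F*T)*F := (mul_assoc F T F).symm
    _ = F*(F*T) := h1.eq
    _ = F^2 * T := by rw [pow_two, mul_assoc]
  | succ e ih =>
    have key : F^(e+2) * (T*F) = F^(e+2) * (F*T) := by
      rw [← sub_eq_zero, ← mul_sub]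
      exact hFpowC' h1 (e+1)
    calc T * F^(e+1+2) = T * (F^(e+2) * F) := by rw [show e+1+2 = (e+2)+1 from rfl, pow_succ]
    _ = (T * F^(e+2)) * F := (mul_assoc _ _ _).symm
    _ = (F^(e+2) * T) * F := by rw [ih]
    _ = F^(e+2) * (T*F) := mul_assoc _ _ _
    _ = F^(e+2) * (F*T) := key
    _ = (F^(e+2) * F) * T := (mul_assoc _ _ _).symm
    _ = F^(e+1+2) * T := by rw [← pow_succ]

private lemma Fpow_Tpow' (h2 : Commute (F*T) T) (h4 : Commute (T*F) T) :
    ∀ k e, F^k * T^(e+2) = T^(e+2) * F^k := by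
  intro k
  induction k with
  | zero => intro e; simp
  | succ k ih =>
    intro e
    calc F^(k+1) * T^(e+2) = F * (F^k * T^(e+2)) := by rw [pow_succ', mul_assoc]
    _ = F * (T^(e+2) * F^k) := by rw [ih]
    _ = (F * T^(e+2)) * F^k := (mul_assoc _ _ _).symm
    _ = (T^(e+2) * F) * F^k := by rw [F_Tpow' h2 h4 e]
    _ = T^(e+2) * F^(k+1) := by rw [mul_assoc, ← pow_succ']

private lemma T_mul_word (h1 : Commute (F*T) F) (h2 : Commute (F*T) T)
    (h3 : Commute (T*F) F) {n k : ℕ} (hk : k ≤ n) (hn : 2 ≤ n) :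
    T * (F^k * T^(n-k)) = F^k * T^(n+1-k) := by
  match k, hk with
  | 0, _ =>
    simp only [pow_zero, one_mul, Nat.sub_zero, ← pow_succ']
  | 1, hk =>
    have hn1 : n - 1 + 1 = n := by omega
    have hC : (T*F - F*T) * T^(n-1) = 0 := by
      have h : n - 1 = (n-2) + 1 := by omega
      rw [h]; exact hCTpow' h2 (n-2)
    calc T * (F^1 * T^(n-1)) = (T*F) * T^(n-1) := by rw [pow_one, ← mul_assoc]
    _ = (F*T) * T^(n-1) + (T*F - F*T) * T^(n-1) := by rw [← add_mul, add_sub_cancel]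
    _ = (F*T) * T^(n-1) := by rw [hC, add_zero]
    _ = F * (T * T^(n-1)) := by rw [mul_assoc]
    _ = F^1 * T^(n+1-1) := by rw [← pow_succ', hn1, pow_one, Nat.add_sub_cancel]
  | (k+2), hk =>
    have h2k : T * F^(k+2) = F^(k+2) * T := T_Fpow' h1 h3 k
    have hsub : n + 1 - (k+2) = (n - (k+2)) + 1 := by omega
    calc T * (F^(k+2) * T^(n-(k+2))) = (T * F^(k+2)) * T^(n-(k+2)) := (mul_assoc _ _ _).symm
    _ = (F^(k+2) * T) * T^(n-(k+2)) := by rw [h2k]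
    _ = F^(k+2) * (T * T^(n-(k+2))) := mul_assoc _ _ _
    _ = F^(k+2) * T^(n+1-(k+2)) := by rw [← pow_succ', hsub]

private lemma pow_decomp (h1 : Commute (F*T) F) (h2 : Commute (F*T) T)
    (h3 : Commute (T*F) F) (h4 : Commute (T*F) T) (m' : ℕ) (hm' : 4 ≤ m') :
    ∀ n, 3 ≤ n → ∃ (c : ℕ → ℕ) (R : A), (∀ k, n < k → c k = 0) ∧
      (T + F)^n = (∑ k ∈ range m', c k • (F^k * T^(n-k))) + F^m' * R := by
  intro n hn
  induction n, hn using Nat.le_induction with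
  | base =>
    refine ⟨fun k => Nat.choose 3 k, 0, fun k hk => Nat.choose_eq_zero_of_lt hk, ?_⟩
    rw [mul_zero, add_zero]
    have hsum : ∑ k ∈ range m', Nat.choose 3 k • (F^k * T^(3-k))
        = ∑ k ∈ range 4, Nat.choose 3 k • (F^k * T^(3-k)) := by
      refine (Finset.sum_subset (Finset.range_subset_range.2 hm') ?_).symm
      intro k _ hk
      rw [Finset.mem_range, not_lt] at hk
      rw [Nat.choose_eq_zero_of_lt (by omega), zero_smul]
    rw [hsum]
    have e3 : (T+F)^3 = T*(T*T) + T*(T*F) + T*(F*T) + T*(F*F)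
        + F*(T*T) + F*(T*F) + F*(F*T) + F*(F*F) := by noncomm_ring
    have hFT2 : F*(T*T) = T*T*F := by
      have h := F_Tpow' h2 h4 0
      rw [pow_two] at h
      exact h
    have wTTF : T*(T*F) = F*(T*T) := by
      calc T*(T*F) = T*T*F := (mul_assoc T T F).symm
      _ = F*(T*T) := hFT2.symm
    have wTFT : T*(F*T) = F*(T*T) := by
      calc T*(F*T) = (T*F)*T := (mul_assoc T F T).symm
      _ = T*(T*F) := h4.eq
      _ = F*(T*T) := wTTF
    have wTFF : T*(F*F) = F*(F*T) := by
      calc T*(F*F) = (T*F)*F := (mul_assoc T F F).symm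
      _ = F*(T*F) := h3.eq
      _ = (F*T)*F := (mul_assoc F T F).symm
      _ = F*(F*T) := h1.eq
    have wFTF : F*(T*F) = F*(F*T) := by
      calc F*(T*F) = (F*T)*F := (mul_assoc F T F).symm
      _ = F*(F*T) := h1.eq
    rw [e3, wTTF, wTFT, wTFF, wFTF]
    simp only [Finset.sum_range_succ, Finset.sum_range_zero]
    norm_num [pow_succ]
    noncomm_ring
  | succ n hn ih =>
    obtain ⟨c, R, hc0, hEq⟩ := ih
    obtain ⟨M, rfl⟩ : ∃ M, m' = M + 1 := ⟨m'-1, by omega⟩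
    refine ⟨fun k => c k + (if k = 0 then 0 else c (k-1)),
      c M • T^(n-M) + (T*R + F*R), ?_, ?_⟩
    · intro k hk
      have hk0 : k ≠ 0 := by omega
      simp only []
      rw [hc0 k (by omega), if_neg hk0, hc0 (k-1) (by omega)]
    · have hTS : T * (∑ k ∈ range (M+1), c k • (F^k * T^(n-k)))
          = ∑ k ∈ range (M+1), c k • (F^k * T^(n+1-k)) := by
        rw [Finset.mul_sum]
        refine Finset.sum_congr rfl fun k _ => ?_
        by_cases hkn : k ≤ n
        · rw [mul_smul_comm, T_mul_word h1 h2 h3 hkn (by omega)]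
        · rw [hc0 k (by omega), zero_smul, zero_smul, mul_zero]
      have hFS : F * (∑ k ∈ range (M+1), c k • (F^k * T^(n-k)))
          = ∑ k ∈ range (M+1), c k • (F^(k+1) * T^(n-k)) := by
        rw [Finset.mul_sum]
        refine Finset.sum_congr rfl fun k _ => ?_
        rw [mul_smul_comm, ← mul_assoc, ← pow_succ']
      have hTR : T * (F^(M+1) * R) = F^(M+1) * (T*R) := by
        have hMe : M + 1 = (M-1) + 2 := by omega
        rw [← mul_assoc, hMe, T_Fpow' h1 h3 (M-1), mul_assoc]
      have hFR : F * (F^(M+1) * R) = F^(M+1) * (F*R) := by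
        rw [← mul_assoc, ← pow_succ', pow_succ, mul_assoc]
      have hsplit : ∑ k ∈ range (M+1), c k • (F^(k+1) * T^(n-k))
          = (∑ k ∈ range M, c k • (F^(k+1) * T^(n-k))) + c M • (F^(M+1) * T^(n-M)) :=
        Finset.sum_range_succ _ M
      have hshift : ∑ k ∈ range (M+1), (if k = 0 then 0 else c (k-1)) • (F^k * T^(n+1-k))
          = ∑ k ∈ range M, c k • (F^(k+1) * T^(n-k)) := by
        rw [Finset.sum_range_succ']
        simp [Nat.succ_sub_succ]
      calc (T+F)^(n+1) = (T+F) * (T+F)^n := pow_succ' _ _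
      _ = (T+F) * ((∑ k ∈ range (M+1), c k • (F^k * T^(n-k))) + F^(M+1) * R) := by
        rw [hEq]
      _ = T * (∑ k ∈ range (M+1), c k • (F^k * T^(n-k)))
          + F * (∑ k ∈ range (M+1), c k • (F^k * T^(n-k)))
          + (T * (F^(M+1) * R) + F * (F^(M+1) * R)) := by noncomm_ring
      _ = (∑ k ∈ range (M+1), c k • (F^k * T^(n+1-k)))
          + ((∑ k ∈ range M, c k • (F^(k+1) * T^(n-k))) + c M • (F^(M+1) * T^(n-M)))
          + (F^(M+1) * (T*R) + F^(M+1) * (F*R)) := by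
        rw [hTS, hFS, hsplit, hTR, hFR]
      _ = (∑ k ∈ range (M+1), (c k + (if k = 0 then 0 else c (k-1))) • (F^k * T^(n+1-k)))
          + F^(M+1) * (c M • T^(n-M) + (T*R + F*R)) := by
        simp only [add_smul]
        rw [Finset.sum_add_distrib, hshift, mul_add, mul_add, mul_smul_comm]
        abel

end RingFacts2


section MainAux
variable {X : Type*} [NormedAddCommGroup X] [NormedSpace ℂ X]

private lemma nsmul_apply' (n : ℕ) (A : X →L[ℂ] X) (x : X) : (n • A) x = n • (A x) := by
  induction n with
  | zero => simp
  | succ n ih => rw [succ_nsmul, succ_nsmul, ContinuousLinearMap.add_apply, ih]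

private lemma rmono (G : X →L[ℂ] X) {a b : ℕ} (hab : a ≤ b) :
    LinearMap.range ((G^b : X →L[ℂ] X) : X →ₗ[ℂ] X) ≤ LinearMap.range ((G^a : X →L[ℂ] X) : X →ₗ[ℂ] X) := by
  rintro x ⟨y, rfl⟩
  exact ⟨(G^(b-a)) y, by
    rw [ContinuousLinearMap.coe_coe, ContinuousLinearMap.coe_coe, ← ContinuousLinearMap.mul_apply, ← pow_add, Nat.add_sub_cancel' hab]⟩

end MainAux

theorem finite_descent_perturbation {X : Type*} [NormedAddCommGroup X] [NormedSpace ℂ X]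
    [CompleteSpace X] (T F : X →L[ℂ] X)
    (hq : ∃ n : ℕ, LinearMap.range ((T ^ n : X →L[ℂ] X) : X →ₗ[ℂ] X) = LinearMap.range ((T ^ (n + 1) : X →L[ℂ] X) : X →ₗ[ℂ] X))
    (hF : ∃ m : ℕ, 1 ≤ m ∧ FiniteDimensional ℂ (LinearMap.range ((F ^ m : X →L[ℂ] X) : X →ₗ[ℂ] X)))
    (h1 : Commute (F * T) F) (h2 : Commute (F * T) T)
    (h3 : Commute (T * F) F) (h4 : Commute (T * F) T) :
    ∃ n : ℕ, LinearMap.range (((T + F) ^ n : X →L[ℂ] X) : X →ₗ[ℂ] X) = LinearMap.range (((T + F) ^ (n + 1) : X →L[ℂ] X) : X →ₗ[ℂ] X) := by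
  classical
  obtain ⟨n₀, hn₀⟩ := hq
  obtain ⟨m, hm1, hmfin⟩ := hF
  -- stabilization of range of powers of T
  have stab : ∀ k, LinearMap.range ((T^(n₀+k) : X →L[ℂ] X) : X →ₗ[ℂ] X) = LinearMap.range ((T^n₀ : X →L[ℂ] X) : X →ₗ[ℂ] X) := by
    intro k
    induction k with
    | zero => rfl
    | succ k ih =>
      refine le_antisymm (rmono T (by omega)) ?_
      rintro x ⟨u, rfl⟩
      have hu : (T^n₀) u ∈ LinearMap.range ((T^(n₀+1) : X →L[ℂ] X) : X →ₗ[ℂ] X) := hn₀ ▸ ⟨u, rfl⟩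
      obtain ⟨v, hv⟩ := hu
      have hv2 : (T^n₀) v ∈ LinearMap.range ((T^(n₀+k) : X →L[ℂ] X) : X →ₗ[ℂ] X) := ih.symm ▸ ⟨v, rfl⟩
      obtain ⟨w, hw⟩ := hv2
      refine ⟨w, ?_⟩
      calc (T^(n₀+(k+1))) w = T ((T^(n₀+k)) w) := by
            rw [show n₀+(k+1) = (n₀+k)+1 from rfl, pow_succ',
              ContinuousLinearMap.mul_apply]
      _ = T ((T^n₀) v) := by rw [← hw]; rfl
      _ = (T^(n₀+1)) v := by rw [pow_succ', ContinuousLinearMap.mul_apply]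
      _ = (T^n₀) u := hv
  set q' := n₀ + 2 with hq'def
  have hq' : LinearMap.range ((T^q' : X →L[ℂ] X) : X →ₗ[ℂ] X) = LinearMap.range ((T^(q'+1) : X →L[ℂ] X) : X →ₗ[ℂ] X) := by
    have a := stab 2
    have b := stab 3
    rw [show q'+1 = n₀+3 from rfl]
    rw [a, b]
  set m' := m + 4 with hm'def
  set W := LinearMap.range ((F^m' : X →L[ℂ] X) : X →ₗ[ℂ] X) with hWdef
  set M := LinearMap.range ((T^q' : X →L[ℂ] X) : X →ₗ[ℂ] X) with hMdef
  have hWfin : FiniteDimensional ℂ W := by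
    exact Submodule.finiteDimensional_of_le (S₂ := LinearMap.range ((F^m : X →L[ℂ] X) : X →ₗ[ℂ] X)) (rmono F (by omega))
  -- W is invariant under T+F
  have hSW : ∀ w ∈ W, (T+F) w ∈ W := by
    rintro _ ⟨u, rfl⟩
    have hT : T ((F^m') u) = (F^m') (T u) := by
      rw [← ContinuousLinearMap.mul_apply, ← ContinuousLinearMap.mul_apply,
        show m' = (m+2)+2 from rfl, T_Fpow' h1 h3 (m+2)]
    have hf : F ((F^m') u) = (F^m') (F u) := by
      rw [← ContinuousLinearMap.mul_apply, ← ContinuousLinearMap.mul_apply,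
        ← pow_succ', pow_succ]
    rw [ContinuousLinearMap.coe_coe, ContinuousLinearMap.add_apply, hT, hf]
    exact add_mem ⟨T u, rfl⟩ ⟨F u, rfl⟩
  -- claimF : downward induction
  have claimF : ∀ i, i ≤ m' → ∀ y ∈ M, (F^(m'-i)) y ∈ Submodule.map ((T+F : X →L[ℂ] X) : X →ₗ[ℂ] X) M ⊔ W := by
    intro i
    induction i with
    | zero =>
      intro _ y hy
      exact Submodule.mem_sup_right ⟨y, by rw [Nat.sub_zero]; rfl⟩
    | succ i ih =>
      intro hi y hy
      have hy' : y ∈ LinearMap.range ((T^(q'+1) : X →L[ℂ] X) : X →ₗ[ℂ] X) := hq' ▸ hy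
      obtain ⟨v, hv⟩ := hy'
      set j := m' - (i+1) with hjdef
      set x := (T^q') v with hxdef
      have hx : x ∈ M := ⟨v, rfl⟩
      have hxy : (F^j) y = T ((F^j) x) := by
        have o1 : (F^j : X →L[ℂ] X) * T^(q'+1) = T^(q'+1) * F^j := by
          rw [show q'+1 = (n₀+1)+2 from rfl]; exact Fpow_Tpow' h2 h4 j (n₀+1)
        have o2 : (F^j : X →L[ℂ] X) * T^q' = T^q' * F^j := by
          rw [show q' = n₀+2 from rfl]; exact Fpow_Tpow' h2 h4 j n₀
        calc (F^j) y = (F^j) ((T^(q'+1)) v) := by rw [← hv]; rfl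
        _ = ((F^j : X →L[ℂ] X) * T^(q'+1)) v := by rw [ContinuousLinearMap.mul_apply]
        _ = ((T^(q'+1) : X →L[ℂ] X) * F^j) v := by rw [o1]
        _ = ((T * (T^q' * F^j) : X →L[ℂ] X)) v := by rw [← mul_assoc, ← pow_succ']
        _ = ((T * (F^j * T^q') : X →L[ℂ] X)) v := by rw [o2]
        _ = T ((F^j) ((T^q') v)) := by
            rw [ContinuousLinearMap.mul_apply, ContinuousLinearMap.mul_apply]
      have hFjx : (F^j) x ∈ M := by
        have o2 : (F^j : X →L[ℂ] X) * T^q' = T^q' * F^j := by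
          rw [show q' = n₀+2 from rfl]; exact Fpow_Tpow' h2 h4 j n₀
        refine ⟨(F^j) v, ?_⟩
        rw [ContinuousLinearMap.coe_coe, ← ContinuousLinearMap.mul_apply, ← o2, ContinuousLinearMap.mul_apply]
      have hsub : (F^j) y = (T+F) ((F^j) x) - (F^(j+1)) x := by
        rw [ContinuousLinearMap.add_apply, hxy]
        have : F ((F^j) x) = (F^(j+1)) x := by
          rw [← ContinuousLinearMap.mul_apply, ← pow_succ']
        rw [this]; abel
      rw [hsub]
      have hj1 : j + 1 = m' - i := by omega
      refine sub_mem (Submodule.mem_sup_left ⟨(F^j) x, hFjx, rfl⟩) ?_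
      rw [hj1]
      exact ih (by omega) x hx
  -- claim2 : M ≤ range (T+F)^n ⊔ W
  have claim2 : ∀ n, M ≤ LinearMap.range (((T+F)^n : X →L[ℂ] X) : X →ₗ[ℂ] X) ⊔ W := by
    intro n
    induction n with
    | zero =>
      intro y _
      exact Submodule.mem_sup_left ⟨y, by simp⟩
    | succ n ih =>
      intro y hy
      have h0 := claimF m' le_rfl y hy
      rw [Nat.sub_self, pow_zero] at h0
      simp only [ContinuousLinearMap.one_apply] at h0
      have hmap : Submodule.map ((T+F : X →L[ℂ] X) : X →ₗ[ℂ] X) M ≤ LinearMap.range (((T+F)^(n+1) : X →L[ℂ] X) : X →ₗ[ℂ] X) ⊔ W := by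
        rintro _ ⟨z, hz, rfl⟩
        obtain ⟨a, ha, w, hw, rfl⟩ := Submodule.mem_sup.mp (ih hz)
        obtain ⟨u, rfl⟩ := ha
        have : (T+F) (((T+F)^n) u + w) = ((T+F)^(n+1)) u + (T+F) w := by
          rw [map_add, ← ContinuousLinearMap.mul_apply, ← pow_succ']
        simp only [ContinuousLinearMap.coe_coe]
        rw [this]
        exact Submodule.add_mem_sup ⟨u, rfl⟩ (hSW w hw)
      exact (sup_le hmap le_sup_right) h0
  -- claim1 : range (T+F)^n ≤ M ⊔ W for large n
  have claim1 : ∀ n, q' + m' ≤ n → LinearMap.range (((T+F)^n : X →L[ℂ] X) : X →ₗ[ℂ] X) ≤ M ⊔ W := by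
    intro n hn
    obtain ⟨c, R, hc0, hEq⟩ := pow_decomp h1 h2 h3 h4 m' (by omega) n (by omega)
    rintro _ ⟨x, rfl⟩
    rw [hEq, ContinuousLinearMap.coe_coe, ContinuousLinearMap.add_apply, ContinuousLinearMap.sum_apply,
      ContinuousLinearMap.mul_apply]
    refine add_mem (Submodule.sum_mem _ fun k hk => ?_) (Submodule.mem_sup_right ⟨R x, rfl⟩)
    rw [Finset.mem_range] at hk
    have hke : (F^k : X →L[ℂ] X) * T^(n-k) = T^(n-k) * F^k := by
      have h : n - k = (n - k - 2) + 2 := by omega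
      rw [h]; exact Fpow_Tpow' h2 h4 k (n-k-2)
    rw [nsmul_apply']
    have hv : (((F^k : X →L[ℂ] X) * T^(n-k)) x : X) = (T^(n-k)) ((F^k) x) := by
      rw [hke, ContinuousLinearMap.mul_apply]
    rw [hv]
    exact nsmul_mem (Submodule.mem_sup_left
      (rmono T (show q' ≤ n - k by omega) ⟨(F^k) x, rfl⟩)) _
  -- assemble
  have hEqn : ∀ n, q' + m' ≤ n → LinearMap.range (((T+F)^n : X →L[ℂ] X) : X →ₗ[ℂ] X) ⊔ W = M ⊔ W := fun n hn =>
    le_antisymm (sup_le (claim1 n hn) le_sup_right) (sup_le (claim2 n) le_sup_right)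
  set N := q' + m' with hNdef
  have hfin : ∀ j : ℕ, FiniteDimensional ℂ ↥(W ⊓ LinearMap.range (((T+F)^(N+j) : X →L[ℂ] X) : X →ₗ[ℂ] X)) :=
    fun j => Submodule.finiteDimensional_of_le inf_le_left
  set r : ℕ → ℕ := fun j => Module.finrank ℂ ↥(W ⊓ LinearMap.range (((T+F)^(N+j) : X →L[ℂ] X) : X →ₗ[ℂ] X))
    with hrdef
  obtain ⟨k, hk⟩ : sInf (Set.range r) ∈ Set.range r := Nat.sInf_mem (Set.range_nonempty r)
  have hmin : ∀ j, r k ≤ r j := fun j => hk ▸ Nat.sInf_le ⟨j, rfl⟩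
  have hDle : W ⊓ LinearMap.range (((T+F)^(N+(k+1)) : X →L[ℂ] X) : X →ₗ[ℂ] X) ≤ W ⊓ LinearMap.range (((T+F)^(N+k) : X →L[ℂ] X) : X →ₗ[ℂ] X) :=
    inf_le_inf_left W (rmono (T+F) (by omega))
  haveI := hfin k
  have hDeq : W ⊓ LinearMap.range (((T+F)^(N+(k+1)) : X →L[ℂ] X) : X →ₗ[ℂ] X) = W ⊓ LinearMap.range (((T+F)^(N+k) : X →L[ℂ] X) : X →ₗ[ℂ] X) :=
    Submodule.eq_of_le_of_finrank_le hDle (hmin (k+1))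
  refine ⟨N + k, le_antisymm ?_ (rmono (T+F) (by omega))⟩
  have hup : LinearMap.range (((T+F)^(N+k) : X →L[ℂ] X) : X →ₗ[ℂ] X) ≤ LinearMap.range (((T+F)^(N+k+1) : X →L[ℂ] X) : X →ₗ[ℂ] X) ⊔ W := by
    calc LinearMap.range (((T+F)^(N+k) : X →L[ℂ] X) : X →ₗ[ℂ] X) ≤ LinearMap.range (((T+F)^(N+k) : X →L[ℂ] X) : X →ₗ[ℂ] X) ⊔ W := le_sup_left
    _ = M ⊔ W := hEqn (N+k) (by omega)
    _ = LinearMap.range (((T+F)^(N+k+1) : X →L[ℂ] X) : X →ₗ[ℂ] X) ⊔ W := (hEqn (N+k+1) (by omega)).symm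
  have hmod : (LinearMap.range (((T+F)^(N+k+1) : X →L[ℂ] X) : X →ₗ[ℂ] X) ⊔ W) ⊓ LinearMap.range (((T+F)^(N+k) : X →L[ℂ] X) : X →ₗ[ℂ] X)
      = LinearMap.range (((T+F)^(N+k+1) : X →L[ℂ] X) : X →ₗ[ℂ] X) ⊔ (W ⊓ LinearMap.range (((T+F)^(N+k) : X →L[ℂ] X) : X →ₗ[ℂ] X)) :=
    sup_inf_assoc_of_le W (rmono (T+F) (by omega))
  have hrange : LinearMap.range (((T+F)^(N+k) : X →L[ℂ] X) : X →ₗ[ℂ] X)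
      = LinearMap.range (((T+F)^(N+k+1) : X →L[ℂ] X) : X →ₗ[ℂ] X) ⊔ (W ⊓ LinearMap.range (((T+F)^(N+k) : X →L[ℂ] X) : X →ₗ[ℂ] X)) := by
    rw [← hmod, inf_eq_right.mpr hup]
  rw [hrange, ← hDeq]
  exact sup_le le_rfl inf_le_right
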